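/- For the prism graph K_3 □ K_2 (the 3-regular graph on 6 vertices consisting of two triangles joined by a perfect matching), the 2-fair coalition number is 4; and for the complete bipartite graph K_{3,3}, the 2-fair coalition number is 3. -/

import Mathlib

/-- `S` is a `k`-fair dominating set of `G`: every vertex outside `S` has exactly `k`
neighbors in `S`. -/
def SimpleGraph.KFairDom {V : Type*} (G : SimpleGraph V) (k : ℕ) (S : Set V) : Prop :=
  ∀ v ∉ S, (G.neighborSet v ∩ S).ncard = k

/-- Disjoint sets `A`, `B` form a `k`-fair coalition: neither is a `k`-fair dominating
set, but their union is. -/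
def SimpleGraph.KFairCoalition {V : Type*} (G : SimpleGraph V) (k : ℕ) (A B : Set V) : Prop :=
  Disjoint A B ∧ ¬ G.KFairDom k A ∧ ¬ G.KFairDom k B ∧ G.KFairDom k (A ∪ B)

/-- `P` is a `k`-fair coalition partition of `G`: a partition of the vertex set into
nonempty blocks, each of which is either a `k`-fair dominating set with exactly `k`
vertices or forms a `k`-fair coalition with another block. -/
def SimpleGraph.IsKFairCoalPartition {V : Type*} (G : SimpleGraph V) (k : ℕ)
    (P : Set (Set V)) : Prop :=
  (∀ A ∈ P, A.Nonempty) ∧ ⋃₀ P = Set.univ ∧ P.PairwiseDisjoint id ∧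
  ∀ A ∈ P, (G.KFairDom k A ∧ A.ncard = k) ∨
    (¬ G.KFairDom k A ∧ ∃ B ∈ P, B ≠ A ∧ G.KFairCoalition k A B)

/-- The `k`-fair coalition number `C_{kf}(G)`: the maximum size of a `k`-fair coalition
partition of `G`. -/
noncomputable def SimpleGraph.kFairCoalNum {V : Type*} (G : SimpleGraph V) (k : ℕ) : ℕ :=
  sSup {n | ∃ P : Set (Set V), G.IsKFairCoalPartition k P ∧ P.ncard = n}

/-- The `k`-fair domatic number `d_{kf}(G)`: the maximum size of a partition of the
vertex set into `k`-fair dominating sets. -/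
noncomputable def SimpleGraph.kFairDomaticNum {V : Type*} (G : SimpleGraph V) (k : ℕ) : ℕ :=
  sSup {n | ∃ P : Set (Set V), (∀ A ∈ P, A.Nonempty) ∧ ⋃₀ P = Set.univ ∧
    P.PairwiseDisjoint id ∧ (∀ A ∈ P, G.KFairDom k A) ∧ P.ncard = n}

/-! ### Auxiliary material -/

open SimpleGraph

namespace TwoFairAux

instance instDecCG {α} [DecidableEq α] : DecidableRel (completeGraph α).Adj :=
  fun a b => decidable_of_iff (a ≠ b) (top_adj a b).symm

instance instDecBP {α β} [DecidableEq α] [DecidableEq β] (G : SimpleGraph α) (H : SimpleGraph β)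
    [DecidableRel G.Adj] [DecidableRel H.Adj] : DecidableRel (G.boxProd H).Adj :=
  fun _ _ => decidable_of_iff _ (boxProd_adj).symm

instance instDecCB {α β} [DecidableEq α] [DecidableEq β] :
    DecidableRel (completeBipartiteGraph α β).Adj :=
  fun a b => decidable_of_iff _ (iff_of_eq (completeBipartiteGraph_adj _ _ a b)).symm

abbrev V1 := Fin 3 × Fin 2
abbrev Gp : SimpleGraph V1 := (completeGraph (Fin 3)).boxProd (completeGraph (Fin 2))
abbrev V2 := Fin 3 ⊕ Fin 3
abbrev Gb : SimpleGraph V2 := completeBipartiteGraph (Fin 3) (Fin 3)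

/-- Finset version of `KFairDom`. -/
def fdomF {V : Type*} [DecidableEq V] (G : SimpleGraph V) [DecidableRel G.Adj]
    (k : ℕ) (s : Finset V) : Prop := ∀ v ∉ s, (s.filter (G.Adj v)).card = k

instance {V : Type*} [Fintype V] [DecidableEq V] (G : SimpleGraph V) [DecidableRel G.Adj]
    (k : ℕ) (s : Finset V) : Decidable (fdomF G k s) := by unfold fdomF; infer_instance

lemma kFairDom_coe {V : Type*} [Fintype V] [DecidableEq V] (G : SimpleGraph V)
    [DecidableRel G.Adj] (k : ℕ) (s : Finset V) : G.KFairDom k ↑s ↔ fdomF G k s := by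
  simp only [SimpleGraph.KFairDom, fdomF, Finset.mem_coe]
  refine forall_congr' fun v => imp_congr_right fun _ => ?_
  have h : G.neighborSet v ∩ ↑s = ↑(s.filter (G.Adj v)) := by
    ext w; simp [SimpleGraph.mem_neighborSet, and_comm]
  rw [h, Set.ncard_coe_finset]

lemma kFairDom_min {V : Type*} [Fintype V] [DecidableEq V] (G : SimpleGraph V)
    [DecidableRel G.Adj] (h : ∀ s : Finset V, fdomF G 2 s → 4 ≤ s.card) :
    ∀ S : Set V, G.KFairDom 2 S → 4 ≤ S.ncard := by
  intro S hS
  rw [← (Set.toFinite S).coe_toFinset] at hS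
  rw [← (Set.toFinite S).coe_toFinset, Set.ncard_coe_finset]
  exact h _ ((kFairDom_coe G 2 _).1 hS)

lemma not_kFairDom_coe {V : Type*} [Fintype V] [DecidableEq V] (G : SimpleGraph V)
    [DecidableRel G.Adj] (s : Finset V) (h : ¬ fdomF G 2 s) : ¬ G.KFairDom 2 ↑s :=
  fun hh => h ((kFairDom_coe G 2 s).1 hh)

lemma union_kFairDom_coe {V : Type*} [Fintype V] [DecidableEq V] (G : SimpleGraph V)
    [DecidableRel G.Adj] (s t : Finset V) (h : fdomF G 2 (s ∪ t)) :
    G.KFairDom 2 (↑s ∪ ↑t) := by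
  rw [← Finset.coe_union]; exact (kFairDom_coe G 2 _).2 h

lemma coal_coe {V : Type*} [Fintype V] [DecidableEq V] (G : SimpleGraph V)
    [DecidableRel G.Adj] (s t : Finset V) (hd : Disjoint s t) (hs : ¬ fdomF G 2 s)
    (ht : ¬ fdomF G 2 t) (hu : fdomF G 2 (s ∪ t)) : G.KFairCoalition 2 ↑s ↑t :=
  ⟨Finset.disjoint_coe.2 hd, not_kFairDom_coe G s hs, not_kFairDom_coe G t ht,
    union_kFairDom_coe G s t hu⟩

lemma ne_coe {V : Type*} [DecidableEq V] {s t : Finset V} (h : s ≠ t) :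
    (↑s : Set V) ≠ ↑t := fun hh => h (Finset.coe_inj.1 hh)

lemma sSup_eq_of {S : Set ℕ} {n : ℕ} (hmem : n ∈ S) (hub : ∀ m ∈ S, m ≤ n) : sSup S = n :=
  le_antisymm (csSup_le ⟨n, hmem⟩ hub) (le_csSup ⟨n, hub⟩ hmem)

end TwoFairAux

open TwoFairAux
lemma part_le_four {V : Type*} [Fintype V] (G : SimpleGraph V)
    (hV : (Set.univ : Set V).ncard = 6)
    (hmin : ∀ S : Set V, G.KFairDom 2 S → 4 ≤ S.ncard)
    (P : Set (Set V)) (hP : G.IsKFairCoalPartition 2 P) : P.ncard ≤ 4 := by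
  obtain ⟨hne, hcov, hdis, hblk⟩ := hP
  by_contra hlt
  push_neg at hlt
  have hPne : P.Nonempty := by
    rcases Set.eq_empty_or_nonempty P with rfl | h
    · simp at hlt
    · exact h
  obtain ⟨A, hA⟩ := hPne
  rcases hblk A hA with ⟨hd, hc⟩ | ⟨-, B, hB, hBA, hdisj, -, -, hu⟩
  · have := hmin A hd; omega
  · have h4 : 4 ≤ (A ∪ B).ncard := hmin _ hu
    have hABsub : ({A, B} : Set (Set V)) ⊆ P := by
      intro X hX; rcases hX with rfl | rfl; exacts [hA, hB]
    have hAB2 : ({A, B} : Set (Set V)).ncard = 2 :=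
      Set.ncard_pair (Ne.symm hBA)
    have hdiff : 2 < (P \ {A, B}).ncard := by
      rw [Set.ncard_diff hABsub, hAB2]; omega
    obtain ⟨C₁, C₂, C₃, h1, h2, h3, h12, h13, h23⟩ := (Set.two_lt_ncard_iff).1 hdiff
    obtain ⟨c₁, hc₁⟩ := hne _ (Set.mem_of_mem_diff h1)
    obtain ⟨c₂, hc₂⟩ := hne _ (Set.mem_of_mem_diff h2)
    obtain ⟨c₃, hc₃⟩ := hne _ (Set.mem_of_mem_diff h3)
    have hdisj2 : ∀ X ∈ P, ∀ Y ∈ P, X ≠ Y → ∀ c ∈ X, c ∉ Y := fun X hX Y hY hne c hc =>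
      Set.disjoint_left.1 (hdis hX hY hne) hc
    have hmemP : ∀ (C : Set V), C ∈ P \ {A, B} → C ∈ P ∧ C ≠ A ∧ C ≠ B := by
      intro C hC
      refine ⟨Set.mem_of_mem_diff hC, ?_, ?_⟩ <;>
        · rintro rfl; exact (Set.notMem_of_mem_diff hC) (by simp)
    obtain ⟨h1P, h1A, h1B⟩ := hmemP _ h1
    obtain ⟨h2P, h2A, h2B⟩ := hmemP _ h2
    obtain ⟨h3P, h3A, h3B⟩ := hmemP _ h3
    have hn1 : c₁ ∉ A ∪ B := by
      rintro (h | h)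
      exacts [hdisj2 _ h1P _ hA h1A _ hc₁ h, hdisj2 _ h1P _ hB h1B _ hc₁ h]
    have hn2 : c₂ ∉ A ∪ B := by
      rintro (h | h)
      exacts [hdisj2 _ h2P _ hA h2A _ hc₂ h, hdisj2 _ h2P _ hB h2B _ hc₂ h]
    have hn3 : c₃ ∉ A ∪ B := by
      rintro (h | h)
      exacts [hdisj2 _ h3P _ hA h3A _ hc₃ h, hdisj2 _ h3P _ hB h3B _ hc₃ h]
    have hc12 : c₁ ≠ c₂ := fun h => hdisj2 _ h1P _ h2P h12 _ hc₁ (h ▸ hc₂)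
    have hc13 : c₁ ≠ c₃ := fun h => hdisj2 _ h1P _ h3P h13 _ hc₁ (h ▸ hc₃)
    have hc23 : c₂ ≠ c₃ := fun h => hdisj2 _ h2P _ h3P h23 _ hc₂ (h ▸ hc₃)
    have hsub : A ∪ B ⊆ Set.univ \ {c₁, c₂, c₃} := by
      intro x hx
      refine ⟨trivial, ?_⟩
      rintro (rfl | rfl | rfl)
      exacts [hn1 hx, hn2 hx, hn3 hx]
    have h3card : ({c₁, c₂, c₃} : Set V).ncard = 3 :=
      Set.ncard_eq_three.2 ⟨c₁, c₂, c₃, hc12, hc13, hc23, rfl⟩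
    have hle : (A ∪ B).ncard ≤ (Set.univ \ {c₁, c₂, c₃} : Set V).ncard :=
      Set.ncard_le_ncard hsub (Set.toFinite _)
    rw [Set.ncard_diff (Set.subset_univ _), hV, h3card] at hle
    omega

lemma part_ne_four {V : Type*} [Fintype V] (G : SimpleGraph V)
    (hV : (Set.univ : Set V).ncard = 6)
    (hmin : ∀ S : Set V, G.KFairDom 2 S → 4 ≤ S.ncard)
    (htri : ∀ (E : Set V) (x y z : V), x ∉ E → y ∉ E → z ∉ E → x ≠ y → x ≠ z → y ≠ z →
      ¬(G.KFairDom 2 (E ∪ {x}) ∧ G.KFairDom 2 (E ∪ {y}) ∧ G.KFairDom 2 (E ∪ {z})))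
    (P : Set (Set V)) (hP : G.IsKFairCoalPartition 2 P) : P.ncard ≠ 4 := by
  obtain ⟨hne, hcov, hdis, hblk⟩ := hP
  intro h4
  have hPne : P.Nonempty := by
    rcases Set.eq_empty_or_nonempty P with rfl | h
    · simp at h4
    · exact h
  have hdisj2 : ∀ X ∈ P, ∀ Y ∈ P, X ≠ Y → ∀ c ∈ X, c ∉ Y := fun X hX Y hY hne' c hc =>
    Set.disjoint_left.1 (hdis hX hY hne') hc
  obtain ⟨A, hA⟩ := hPne
  rcases hblk A hA with ⟨hd, hc⟩ | ⟨-, B, hB, hBA, hdisjAB, -, -, hu⟩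
  · have := hmin A hd; omega
  have hABu : 4 ≤ (A ∪ B).ncard := hmin _ hu
  have hABsub : ({A, B} : Set (Set V)) ⊆ P := by
    intro X hX; rcases hX with rfl | rfl; exacts [hA, hB]
  have hAB2 : ({A, B} : Set (Set V)).ncard = 2 := Set.ncard_pair (Ne.symm hBA)
  have hdiff : (P \ {A, B}).ncard = 2 := by
    rw [Set.ncard_diff hABsub, hAB2, h4]
  obtain ⟨C, D, hCD, hCDeq⟩ := Set.ncard_eq_two.1 hdiff
  have hCmem : C ∈ P \ {A, B} := by rw [hCDeq]; simp
  have hDmem : D ∈ P \ {A, B} := by rw [hCDeq]; simp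
  have hmemP : ∀ (X : Set V), X ∈ P \ {A, B} → X ∈ P ∧ X ≠ A ∧ X ≠ B := by
    intro X hX
    refine ⟨Set.mem_of_mem_diff hX, ?_, ?_⟩ <;>
      · rintro rfl; exact (Set.notMem_of_mem_diff hX) (by simp)
  obtain ⟨hCP, hCA, hCB⟩ := hmemP _ hCmem
  obtain ⟨hDP, hDA, hDB⟩ := hmemP _ hDmem
  -- C ∪ D = (A ∪ B)ᶜ
  have hcomp : C ∪ D = (A ∪ B)ᶜ := by
    apply Set.eq_of_subset_of_subset
    · rintro x (hx | hx) (h | h)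
      exacts [hdisj2 _ hCP _ hA hCA _ hx h, hdisj2 _ hCP _ hB hCB _ hx h,
        hdisj2 _ hDP _ hA hDA _ hx h, hdisj2 _ hDP _ hB hDB _ hx h]
    · intro x hx
      have hxu : x ∈ ⋃₀ P := by rw [hcov]; trivial
      obtain ⟨E, hEP, hxE⟩ := hxu
      have hEAB : E ∉ ({A, B} : Set (Set V)) := by
        rintro (rfl | rfl)
        exacts [hx (Or.inl hxE), hx (Or.inr hxE)]
      have : E ∈ ({C, D} : Set (Set V)) := by rw [← hCDeq]; exact ⟨hEP, hEAB⟩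
      rcases this with rfl | rfl
      exacts [Or.inl hxE, Or.inr hxE]
  have hCDu : (C ∪ D).ncard = 2 := by
    have := Set.ncard_add_ncard_compl (A ∪ B)
    rw [← hcomp] at this
    have h6 : Nat.card V = 6 := by rwa [Set.ncard_univ] at hV
    have hle6 : (A ∪ B).ncard + (C ∪ D).ncard = 6 := by omega
    have hge : 1 ≤ C.ncard ∧ 1 ≤ D.ncard := by
      constructor <;> rw [Nat.one_le_iff_ne_zero, Ne, Set.ncard_eq_zero]
      exacts [Set.Nonempty.ne_empty (hne _ hCP), Set.Nonempty.ne_empty (hne _ hDP)]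
    have hCDd : Disjoint C D := hdis hCP hDP hCD
    have := Set.ncard_union_eq hCDd (Set.toFinite _) (Set.toFinite _)
    omega
  have hCDd : Disjoint C D := hdis hCP hDP hCD
  have hCDsum := Set.ncard_union_eq hCDd (Set.toFinite _) (Set.toFinite _)
  have hC1 : C.ncard = 1 := by
    have : 1 ≤ C.ncard := by
      rw [Nat.one_le_iff_ne_zero, Ne, Set.ncard_eq_zero]
      exact Set.Nonempty.ne_empty (hne _ hCP)
    have : 1 ≤ D.ncard := by
      rw [Nat.one_le_iff_ne_zero, Ne, Set.ncard_eq_zero]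
      exact Set.Nonempty.ne_empty (hne _ hDP)
    omega
  have hD1 : D.ncard = 1 := by omega
  have hAB4 : (A ∪ B).ncard = 4 := by
    have := Set.ncard_add_ncard_compl (A ∪ B)
    rw [← hcomp] at this
    have h6 : Nat.card V = 6 := by rwa [Set.ncard_univ] at hV
    omega
  have hABsum : A.ncard + B.ncard = 4 := by
    rw [← Set.ncard_union_eq hdisjAB (Set.toFinite _) (Set.toFinite _)]; exact hAB4
  obtain ⟨y, rfl⟩ := Set.ncard_eq_one.1 hC1
  obtain ⟨z, rfl⟩ := Set.ncard_eq_one.1 hD1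
  -- partner of {y}
  rcases hblk _ hCP with ⟨-, hcard⟩ | ⟨-, B', hB'P, hB'C, hdisjC, -, -, huC⟩
  · rw [hC1] at hcard; omega
  have hB'3 : 3 ≤ B'.ncard := by
    have h1 := hmin _ huC
    have h2 := Set.ncard_union_le ({y} : Set V) B'
    rw [Set.ncard_singleton] at h2
    omega
  have hB'AB : B' = A ∨ B' = B := by
    by_cases hmem : B' ∈ ({A, B} : Set (Set V))
    · rcases hmem with rfl | rfl; exacts [Or.inl rfl, Or.inr rfl]
    · have : B' ∈ ({({y} : Set V), {z}} : Set (Set V)) := by rw [← hCDeq]; exact ⟨hB'P, hmem⟩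
      rcases this with rfl | rfl
      · exact absurd rfl hB'C
      · rw [Set.ncard_singleton] at hB'3; omega
  obtain ⟨E, F, hEP, hFP, hEFu, hKCE, hEFd, hsetEF, hE3'⟩ :
      ∃ E F : Set V, E ∈ P ∧ F ∈ P ∧ E ∪ F = A ∪ B ∧ G.KFairDom 2 ({y} ∪ E) ∧
        Disjoint E F ∧ ({A, B} : Set (Set V)) = {E, F} ∧ 3 ≤ E.ncard := by
    rcases hB'AB with rfl | rfl
    · exact ⟨B', B, hB'P, hB, rfl, huC, hdisjAB, rfl, hB'3⟩
    · exact ⟨B', A, hB'P, hA, Set.union_comm _ _, huC, hdisjAB.symm, Set.pair_comm _ _, hB'3⟩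
  have hsum : E.ncard + F.ncard = 4 := by
    rw [← Set.ncard_union_eq hEFd (Set.toFinite _) (Set.toFinite _), hEFu]; exact hAB4
  have hF1 : F.ncard = 1 := by
    have h1 : 1 ≤ F.ncard := by
      rw [Nat.one_le_iff_ne_zero, Ne, Set.ncard_eq_zero]
      exact (hne _ hFP).ne_empty
    omega
  obtain ⟨x, hFx⟩ := Set.ncard_eq_one.1 hF1
  have hEAB : E = A ∨ E = B := by
    have : E ∈ ({A, B} : Set (Set V)) := by rw [hsetEF]; exact Or.inl rfl
    exact this
  have hEny : E ≠ ({y} : Set V) := by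
    rcases hEAB with rfl | rfl
    exacts [Ne.symm hCA, Ne.symm hCB]
  have hEnz : E ≠ ({z} : Set V) := by
    rcases hEAB with rfl | rfl
    exacts [Ne.symm hDA, Ne.symm hDB]
  -- partner of {z}
  rcases hblk _ hDP with ⟨-, hcard⟩ | ⟨-, B'', hB''P, hB''D, hdisjD, -, -, huD⟩
  · rw [hD1] at hcard; omega
  have hB''3 : 3 ≤ B''.ncard := by
    have h1 := hmin _ huD
    have h2 := Set.ncard_union_le ({z} : Set V) B''
    rw [Set.ncard_singleton] at h2
    omega
  have hB''E : B'' = E := by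
    by_cases hmem : B'' ∈ ({A, B} : Set (Set V))
    · rw [hsetEF] at hmem
      rcases hmem with rfl | rfl
      · rfl
      · omega
    · have : B'' ∈ ({({y} : Set V), {z}} : Set (Set V)) := by rw [← hCDeq]; exact ⟨hB''P, hmem⟩
      rcases this with h | h
      · rw [h, Set.ncard_singleton] at hB''3; omega
      · exact absurd h hB''D
  rw [hB''E] at huD
  have hxF : x ∈ F := by rw [hFx]; exact rfl
  refine htri E x y z ?_ ?_ ?_ ?_ ?_ ?_ ⟨?_, ?_, ?_⟩
  · exact Set.disjoint_right.1 hEFd hxF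
  · exact fun h => hdisj2 _ hCP _ hEP (Ne.symm hEny) y rfl h
  · exact fun h => hdisj2 _ hDP _ hEP (Ne.symm hEnz) z rfl h
  · intro h
    have hxAB : x ∈ A ∪ B := by rw [← hEFu]; exact Or.inr hxF
    have : y ∈ (A ∪ B)ᶜ := by rw [← hcomp]; exact Or.inl rfl
    exact this (h ▸ hxAB)
  · intro h
    have hxAB : x ∈ A ∪ B := by rw [← hEFu]; exact Or.inr hxF
    have : z ∈ (A ∪ B)ᶜ := by rw [← hcomp]; exact Or.inr rfl
    exact this (h ▸ hxAB)
  · intro h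
    exact hCD (by rw [h])
  · have hEx : E ∪ {x} = A ∪ B := by rw [← hFx, hEFu]
    rw [hEx]; exact hu
  · rw [Set.union_comm]; exact hKCE
  · rw [Set.union_comm]; exact huD

namespace TwoFairAux

lemma prism_min : ∀ s : Finset V1, fdomF Gp 2 s → 4 ≤ s.card := by decide

lemma k33_min : ∀ s : Finset V2, fdomF Gb 2 s → 4 ≤ s.card := by decide

set_option synthInstance.maxSize 2000 in
set_option synthInstance.maxHeartbeats 1000000 in
set_option maxHeartbeats 2000000 in
lemma k33_tri : ∀ b : Finset V2, ∀ x y z : V2, x ∉ b → y ∉ b → z ∉ b → x ≠ y → x ≠ z → y ≠ z →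
    ¬(fdomF Gb 2 (insert x b) ∧ fdomF Gb 2 (insert y b) ∧ fdomF Gb 2 (insert z b)) := by
  decide

lemma k33_tri_set : ∀ (E : Set V2) (x y z : V2), x ∉ E → y ∉ E → z ∉ E → x ≠ y → x ≠ z →
    y ≠ z → ¬(Gb.KFairDom 2 (E ∪ {x}) ∧ Gb.KFairDom 2 (E ∪ {y}) ∧ Gb.KFairDom 2 (E ∪ {z})) := by
  rintro E x y z hx hy hz hxy hxz hyz ⟨h1, h2, h3⟩
  have hfin := Set.toFinite E
  have hcoe : ∀ w : V2, (↑(insert w hfin.toFinset) : Set V2) = E ∪ {w} := by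
    intro w
    rw [Finset.coe_insert, hfin.coe_toFinset, Set.union_singleton]
  refine k33_tri hfin.toFinset x y z ?_ ?_ ?_ hxy hxz hyz
    ⟨(kFairDom_coe Gb 2 _).1 ((hcoe x).symm ▸ h1),
     (kFairDom_coe Gb 2 _).1 ((hcoe y).symm ▸ h2),
     (kFairDom_coe Gb 2 _).1 ((hcoe z).symm ▸ h3)⟩ <;>
    rw [Set.Finite.mem_toFinset]
  exacts [hx, hy, hz]

def a1 : Finset V1 := {(0,0),(1,0),(2,0)}
def b0 : Finset V1 := {(0,1)}
def b1 : Finset V1 := {(1,1)}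
def b2 : Finset V1 := {(2,1)}

def P1 : Set (Set V1) := {↑a1, ↑b0, ↑b1, ↑b2}

lemma prism_partition : Gp.IsKFairCoalPartition 2 P1 := by
  refine ⟨?_, ?_, ?_, ?_⟩
  · rintro A (rfl | rfl | rfl | rfl) <;> exact Finset.coe_nonempty.2 (by decide)
  · have h1 : ⋃₀ P1 = (↑(a1 ∪ (b0 ∪ (b1 ∪ b2))) : Set V1) := by
      simp only [P1, Set.sUnion_insert, Set.sUnion_singleton, Finset.coe_union]
    rw [h1, show a1 ∪ (b0 ∪ (b1 ∪ b2)) = Finset.univ by decide, Finset.coe_univ]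
  · rintro A (rfl | rfl | rfl | rfl) B (rfl | rfl | rfl | rfl) hne <;>
      first
        | exact absurd rfl hne
        | exact Finset.disjoint_coe.2 (by decide)
  · rintro A (rfl | rfl | rfl | rfl)
    · exact Or.inr ⟨not_kFairDom_coe Gp a1 (by decide), ↑b0, Or.inr (Or.inl rfl),
        ne_coe (by decide), coal_coe Gp a1 b0 (by decide) (by decide) (by decide) (by decide)⟩
    · exact Or.inr ⟨not_kFairDom_coe Gp b0 (by decide), ↑a1, Or.inl rfl,
        ne_coe (by decide), coal_coe Gp b0 a1 (by decide) (by decide) (by decide) (by decide)⟩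
    · exact Or.inr ⟨not_kFairDom_coe Gp b1 (by decide), ↑a1, Or.inl rfl,
        ne_coe (by decide), coal_coe Gp b1 a1 (by decide) (by decide) (by decide) (by decide)⟩
    · exact Or.inr ⟨not_kFairDom_coe Gp b2 (by decide), ↑a1, Or.inl rfl,
        ne_coe (by decide), coal_coe Gp b2 a1 (by decide) (by decide) (by decide) (by decide)⟩

lemma prism_P1_card : P1.ncard = 4 := by
  have h1 : (↑a1 : Set V1) ∉ ({↑b0, ↑b1, ↑b2} : Set (Set V1)) := by
    rintro (h | h | h) <;> exact absurd (Finset.coe_inj.1 h) (by decide)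
  have h2 : (↑b0 : Set V1) ∉ ({↑b1, ↑b2} : Set (Set V1)) := by
    rintro (h | h) <;> exact absurd (Finset.coe_inj.1 h) (by decide)
  have h3 : (↑b1 : Set V1) ∉ ({↑b2} : Set (Set V1)) := by
    rintro h
    exact absurd (Finset.coe_inj.1 h) (by decide)
  rw [P1, Set.ncard_insert_of_notMem h1, Set.ncard_insert_of_notMem h2,
    Set.ncard_insert_of_notMem h3, Set.ncard_singleton]

def m0 : Finset V2 := {.inl 0, .inr 0}
def m1 : Finset V2 := {.inl 1, .inr 1}
def m2 : Finset V2 := {.inl 2, .inr 2}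

def P2 : Set (Set V2) := {↑m0, ↑m1, ↑m2}

lemma k33_partition : Gb.IsKFairCoalPartition 2 P2 := by
  refine ⟨?_, ?_, ?_, ?_⟩
  · rintro A (rfl | rfl | rfl) <;> exact Finset.coe_nonempty.2 (by decide)
  · have h1 : ⋃₀ P2 = (↑(m0 ∪ (m1 ∪ m2)) : Set V2) := by
      simp only [P2, Set.sUnion_insert, Set.sUnion_singleton, Finset.coe_union]
    rw [h1, show m0 ∪ (m1 ∪ m2) = Finset.univ by decide, Finset.coe_univ]
  · rintro A (rfl | rfl | rfl) B (rfl | rfl | rfl) hne <;>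
      first
        | exact absurd rfl hne
        | exact Finset.disjoint_coe.2 (by decide)
  · rintro A (rfl | rfl | rfl)
    · exact Or.inr ⟨not_kFairDom_coe Gb m0 (by decide), ↑m1, Or.inr (Or.inl rfl),
        ne_coe (by decide), coal_coe Gb m0 m1 (by decide) (by decide) (by decide) (by decide)⟩
    · exact Or.inr ⟨not_kFairDom_coe Gb m1 (by decide), ↑m0, Or.inl rfl,
        ne_coe (by decide), coal_coe Gb m1 m0 (by decide) (by decide) (by decide) (by decide)⟩
    · exact Or.inr ⟨not_kFairDom_coe Gb m2 (by decide), ↑m0, Or.inl rfl,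
        ne_coe (by decide), coal_coe Gb m2 m0 (by decide) (by decide) (by decide) (by decide)⟩

lemma k33_P2_card : P2.ncard = 3 := by
  have h1 : (↑m0 : Set V2) ∉ ({↑m1, ↑m2} : Set (Set V2)) := by
    rintro (h | h) <;> exact absurd (Finset.coe_inj.1 h) (by decide)
  have h2 : (↑m1 : Set V2) ∉ ({↑m2} : Set (Set V2)) := by
    rintro h
    exact absurd (Finset.coe_inj.1 h) (by decide)
  rw [P2, Set.ncard_insert_of_notMem h1, Set.ncard_insert_of_notMem h2, Set.ncard_singleton]

end TwoFairAux

theorem twoFairCoalNum_cubic_order_six :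
    ((completeGraph (Fin 3)).boxProd (completeGraph (Fin 2))).kFairCoalNum 2 = 4 ∧
    (completeBipartiteGraph (Fin 3) (Fin 3)).kFairCoalNum 2 = 3 := by
  constructor
  · have hV : (Set.univ : Set V1).ncard = 6 := by
      rw [Set.ncard_univ, Nat.card_eq_fintype_card]; rfl
    have hmin := kFairDom_min Gp prism_min
    refine sSup_eq_of ⟨P1, prism_partition, prism_P1_card⟩ ?_
    rintro m ⟨P, hP, rfl⟩
    exact part_le_four Gp hV hmin P hP
  · have hV : (Set.univ : Set V2).ncard = 6 := by
      rw [Set.ncard_univ, Nat.card_eq_fintype_card]; rfl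
    have hmin := kFairDom_min Gb k33_min
    refine sSup_eq_of ⟨P2, k33_partition, k33_P2_card⟩ ?_
    rintro m ⟨P, hP, rfl⟩
    have h4 := part_le_four Gb hV hmin P hP
    have hne4 := part_ne_four Gb hV hmin k33_tri_set P hP
    omega
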